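/- Fix a deterministic input sequence u_0,…,u_T with ‖u_t‖₂ ≤ β for all t, assume the noise assumption and the stability assumption, and assume Ṽ = ŨᵀŨ is positive definite with smallest eigenvalue λ_min(Ṽ). Let ΔG = vec(Ĝ) − vec(G). Then the mean estimation error satisfies ‖E[ΔG]‖_Ṽ ≤ β² ‖B‖ ‖C‖ (φ ρᴸ/(1−ρ)) √(T−L) and ‖E[ΔG]‖₂ ≤ β² ‖B‖ ‖C‖ (φ ρᴸ/(1−ρ)) √((T−L)/λ_min(Ṽ)). -/

import Mathlib

open MeasureTheory ProbabilityTheory Matrix Finset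

noncomputable section

/-- Frobenius norm of a real matrix. -/
def frobNorm {m k : Type*} [Fintype m] [Fintype k] (M : Matrix m k ℝ) : ℝ :=
  Real.sqrt (∑ i, ∑ j, M i j ^ 2)

/-- Spectral (ℓ²-operator) norm of a real matrix. -/
def specNorm {m k : Type*} [Fintype m] [Fintype k] [DecidableEq k]
    (M : Matrix m k ℝ) : ℝ :=
  ‖LinearMap.toContinuousLinearMap (Matrix.toEuclideanLin M)‖

/-- Euclidean norm of a vector. -/
def vecNorm {k : Type*} [Fintype k] (v : k → ℝ) : ℝ :=
  Real.sqrt (∑ i, v i ^ 2)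

/-- Ellipsoidal norm `‖v‖_M = √(vᵀ M v)`. -/
def mnorm {k : Type*} [Fintype k] (M : Matrix k k ℝ) (v : k → ℝ) : ℝ :=
  Real.sqrt (v ⬝ᵥ (M *ᵥ v))

/-- Kronecker product of two vectors. -/
def vkron {a b : Type*} (x : a → ℝ) (y : b → ℝ) : a × b → ℝ := fun i => x i.1 * y i.2

/-- Smallest eigenvalue of a symmetric matrix, as the infimum of the Rayleigh
quotient over unit vectors. -/
def lambdaMin {κ : Type*} [Fintype κ] (M : Matrix κ κ ℝ) : ℝ :=
  sInf {r : ℝ | ∃ v : κ → ℝ, ∑ i, v i ^ 2 = 1 ∧ r = v ⬝ᵥ (M *ᵥ v)}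

/-- The history vector `ū_t = (u_t, u_{t-1}, …, u_{t-L+1})`, block `i` being `u_{t-i}`. -/
def ubar {p : ℕ} (L : ℕ) (u : ℕ → Fin p → ℝ) (t : ℕ) : Fin L × Fin p → ℝ :=
  fun i => u (t - (i.1 : ℕ)) i.2

/-- The state sequence of the system `x_{t+1} = A x_t + B u_t + w_t`, `x_0 = 0`. -/
def state {Ω : Type*} {n p : ℕ} (A : Matrix (Fin n) (Fin n) ℝ)
    (B : Matrix (Fin n) (Fin p) ℝ) (u : ℕ → Fin p → ℝ) (w : ℕ → Ω → Fin n → ℝ) :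
    ℕ → Ω → Fin n → ℝ
  | 0 => fun _ => 0
  | t + 1 => fun ω => A *ᵥ state A B u w t ω + B *ᵥ u t + w t ω

/-- The output `y_t = u_tᵀ C x_t + z_t`. -/
def output {Ω : Type*} {n p : ℕ} (A : Matrix (Fin n) (Fin n) ℝ)
    (B : Matrix (Fin n) (Fin p) ℝ) (C : Matrix (Fin p) (Fin n) ℝ)
    (u : ℕ → Fin p → ℝ) (w : ℕ → Ω → Fin n → ℝ) (z : ℕ → Ω → ℝ) (t : ℕ) (ω : Ω) : ℝ :=
  u t ⬝ᵥ (C *ᵥ state A B u w t ω) + z t ω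

/-- Index type for the combined noise family `(w_t) ∪ (z_t)`. -/
abbrev NoiseType (n : ℕ) : ℕ ⊕ ℕ → Type
  | Sum.inl _ => Fin n → ℝ
  | Sum.inr _ => ℝ

instance (n : ℕ) : ∀ i, MeasurableSpace (NoiseType n i)
  | Sum.inl _ => inferInstanceAs (MeasurableSpace (Fin n → ℝ))
  | Sum.inr _ => inferInstanceAs (MeasurableSpace ℝ)

/-- The combined noise family. -/
def noiseFun {Ω : Type*} {n : ℕ} (w : ℕ → Ω → Fin n → ℝ) (z : ℕ → Ω → ℝ) :
    ∀ i : ℕ ⊕ ℕ, Ω → NoiseType n i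
  | Sum.inl t => w t
  | Sum.inr t => z t

/-- Noise assumption: the family `(w_t) ∪ (z_t)` is mutually independent, the `w_t`
are identically distributed, centered, with covariance `Sw`, and the `z_t` are
identically distributed, centered, with variance `σz²`. -/
structure NoiseAssumption {Ω : Type*} [MeasurableSpace Ω] {n : ℕ} (μ : Measure Ω)
    (w : ℕ → Ω → Fin n → ℝ) (z : ℕ → Ω → ℝ)
    (Sw : Matrix (Fin n) (Fin n) ℝ) (σz : ℝ) : Prop where
  meas_w : ∀ t, Measurable (w t)
  meas_z : ∀ t, Measurable (z t)
  indep : iIndepFun (noiseFun w z) μ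
  ident_w : ∀ s t, IdentDistrib (w s) (w t) μ μ
  ident_z : ∀ s t, IdentDistrib (z s) (z t) μ μ
  int_w : ∀ t i, Integrable (fun ω => w t ω i) μ
  mean_w : ∀ t i, ∫ ω, w t ω i ∂μ = 0
  int_ww : ∀ t i j, Integrable (fun ω => w t ω i * w t ω j) μ
  cov_w : ∀ t i j, ∫ ω, w t ω i * w t ω j ∂μ = Sw i j
  int_z : ∀ t, Integrable (z t) μ
  mean_z : ∀ t, ∫ ω, z t ω ∂μ = 0
  int_zz : ∀ t, Integrable (fun ω => z t ω ^ 2) μ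
  var_z : ∀ t, ∫ ω, z t ω ^ 2 ∂μ = σz ^ 2

/-- The infinite-horizon controllability Gramian `Γ_w^∞ = Σ_{i=0}^∞ Aⁱ Sw (Aⁱ)ᵀ`. -/
def gramInf {n : ℕ} (A Sw : Matrix (Fin n) (Fin n) ℝ) : Matrix (Fin n) (Fin n) ℝ :=
  ∑' i : ℕ, A ^ i * Sw * (A ^ i)ᵀ

/-- The Markov parameter matrix `G = [CB, CAB, …, CA^{L-1}B]`, block `k` being `C Aᵏ B`. -/
def markovG {n p : ℕ} (L : ℕ) (A : Matrix (Fin n) (Fin n) ℝ)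
    (B : Matrix (Fin n) (Fin p) ℝ) (C : Matrix (Fin p) (Fin n) ℝ) :
    Matrix (Fin p) (Fin L × Fin p) ℝ :=
  Matrix.of fun i k => (C * A ^ (k.1 : ℕ) * B) i k.2

/-- The matrix `F = [C, CA, …, CA^{L-1}]`, block `k` being `C Aᵏ`. -/
def markovF {n p : ℕ} (L : ℕ) (A : Matrix (Fin n) (Fin n) ℝ)
    (C : Matrix (Fin p) (Fin n) ℝ) : Matrix (Fin p) (Fin L × Fin n) ℝ :=
  Matrix.of fun i k => (C * A ^ (k.1 : ℕ)) i k.2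

/-- Column-major vectorization of a `p × κ` matrix: `vec(M)_(a,b) = M b a`,
so that `uᵀ M ū = (ū ⊗ u) ⬝ᵥ vec(M)`. -/
def vecOf {p : ℕ} {κ : Type*} (M : Matrix (Fin p) κ ℝ) : κ × Fin p → ℝ :=
  fun i => M i.2 i.1

/-- The design matrix `Ũ` whose row `s` (corresponding to `t = L+1+s`) is
`(ū_{t-1} ⊗ u_t)ᵀ`. -/
def designU {p : ℕ} (L T : ℕ) (u : ℕ → Fin p → ℝ) :
    Matrix (Fin (T - L)) ((Fin L × Fin p) × Fin p) ℝ :=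
  Matrix.of fun s => vkron (ubar L u (L + (s : ℕ))) (u (L + (s : ℕ) + 1))

/- ### Auxiliary lemmas -/

open scoped Matrix.Norms.L2Operator

lemma specNorm_eq_norm' {m k : Type*} [Fintype m] [Fintype k] [DecidableEq k]
    (M : Matrix m k ℝ) : specNorm M = ‖M‖ := rfl

lemma vecNorm_eq_norm' {k : Type*} [Fintype k] (v : k → ℝ) :
    vecNorm v = ‖(EuclideanSpace.equiv k ℝ).symm v‖ := by
  simp [vecNorm, EuclideanSpace.norm_eq, Real.norm_eq_abs, sq_abs]

lemma abs_dotProduct_mulVec_le' {m k : Type*} [Fintype m] [Fintype k] [DecidableEq k]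
    (M : Matrix m k ℝ) (a : m → ℝ) (v : k → ℝ) :
    |a ⬝ᵥ M *ᵥ v| ≤ specNorm M * vecNorm a * vecNorm v := by
  have h1 : a ⬝ᵥ M *ᵥ v =
      inner ℝ ((EuclideanSpace.equiv m ℝ).symm a) ((EuclideanSpace.equiv m ℝ).symm (M *ᵥ v)) := by
    simp [PiLp.inner_apply, RCLike.inner_apply, dotProduct, mul_comm]
  rw [h1]
  calc |inner ℝ ((EuclideanSpace.equiv m ℝ).symm a)
        ((EuclideanSpace.equiv m ℝ).symm (M *ᵥ v) : EuclideanSpace ℝ m)|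
      ≤ ‖(EuclideanSpace.equiv m ℝ).symm a‖ *
          ‖((EuclideanSpace.equiv m ℝ).symm (M *ᵥ v) : EuclideanSpace ℝ m)‖ :=
        abs_real_inner_le_norm _ _
    _ ≤ ‖(EuclideanSpace.equiv m ℝ).symm a‖ * (‖M‖ * ‖(EuclideanSpace.equiv k ℝ).symm v‖) := by
        apply mul_le_mul_of_nonneg_left (M.l2_opNorm_mulVec _) (norm_nonneg _)
    _ = specNorm M * vecNorm a * vecNorm v := by
        rw [specNorm_eq_norm', vecNorm_eq_norm', vecNorm_eq_norm']; ring

lemma specNorm_mul_le' {m k l : Type*} [Fintype m] [Fintype k] [Fintype l]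
    [DecidableEq k] [DecidableEq l] (M : Matrix m k ℝ) (N : Matrix k l ℝ) :
    specNorm (M * N) ≤ specNorm M * specNorm N := by
  simpa only [specNorm_eq_norm'] using Matrix.l2_opNorm_mul M N

lemma specNorm_nonneg' {m k : Type*} [Fintype m] [Fintype k] [DecidableEq k]
    (M : Matrix m k ℝ) : 0 ≤ specNorm M := norm_nonneg _

lemma sum_pow_Ico_le' {ρ : ℝ} (h0 : 0 < ρ) (h1 : ρ < 1) (L t : ℕ) :
    ∑ k ∈ Finset.Ico L t, ρ ^ k ≤ ρ ^ L / (1 - ρ) := by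
  rw [Finset.sum_Ico_eq_sum_range]
  simp only [pow_add]
  rw [← Finset.mul_sum, div_eq_mul_inv]
  apply mul_le_mul_of_nonneg_left _ (pow_nonneg h0.le L)
  rw [geom_sum_eq h1.ne, inv_eq_one_div]
  have he : (ρ ^ (t - L) - 1) / (ρ - 1) = (1 - ρ ^ (t - L)) / (1 - ρ) := by
    rw [← neg_sub (1:ℝ) (ρ ^ (t - L)), ← neg_sub (1:ℝ) ρ, neg_div_neg_eq]
  rw [he]
  gcongr
  · have := pow_nonneg h0.le (t - L); linarith

lemma lambdaMin_bddBelow' {κ : Type*} [Fintype κ] {M : Matrix κ κ ℝ}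
    (hM : M.PosSemidef) :
    ∀ r ∈ {r : ℝ | ∃ v : κ → ℝ, ∑ i, v i ^ 2 = 1 ∧ r = v ⬝ᵥ (M *ᵥ v)}, 0 ≤ r := by
  rintro r ⟨v, -, rfl⟩
  simpa using hM.dotProduct_mulVec_nonneg v

lemma lambdaMin_mul_le' {κ : Type*} [Fintype κ] {M : Matrix κ κ ℝ}
    (hM : M.PosSemidef) (v : κ → ℝ) :
    lambdaMin M * (∑ i, v i ^ 2) ≤ v ⬝ᵥ (M *ᵥ v) := by
  rcases eq_or_ne v 0 with rfl | hv
  · simp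
  · have hs : 0 < ∑ i, v i ^ 2 := by
      obtain ⟨i, hi⟩ := Function.ne_iff.mp hv
      have h0 : 0 < v i ^ 2 := by have := abs_pos.mpr hi; nlinarith [sq_abs (v i)]
      exact Finset.sum_pos' (fun j _ => sq_nonneg (v j)) ⟨i, Finset.mem_univ i, h0⟩
    set c := Real.sqrt (∑ i, v i ^ 2) with hc
    have hcpos : 0 < c := Real.sqrt_pos.mpr hs
    have hmem : lambdaMin M ≤ (c⁻¹ • v) ⬝ᵥ (M *ᵥ (c⁻¹ • v)) := by
      apply csInf_le ⟨0, fun r hr => lambdaMin_bddBelow' hM r hr⟩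
      refine ⟨c⁻¹ • v, ?_, rfl⟩
      have : ∑ i, (c⁻¹ • v) i ^ 2 = c⁻¹ ^ 2 * ∑ i, v i ^ 2 := by
        simp [Finset.mul_sum, mul_pow]
      rw [this, hc, inv_pow, Real.sq_sqrt hs.le, inv_mul_cancel₀ hs.ne']
    have hexp : (c⁻¹ • v) ⬝ᵥ (M *ᵥ (c⁻¹ • v)) = c⁻¹ ^ 2 * (v ⬝ᵥ (M *ᵥ v)) := by
      rw [Matrix.mulVec_smul, dotProduct_smul, smul_dotProduct]
      simp [sq]; ring
    rw [hexp] at hmem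
    have hc2 : c ^ 2 = ∑ i, v i ^ 2 := Real.sq_sqrt hs.le
    calc lambdaMin M * ∑ i, v i ^ 2
        ≤ (c⁻¹ ^ 2 * (v ⬝ᵥ (M *ᵥ v))) * ∑ i, v i ^ 2 :=
          mul_le_mul_of_nonneg_right hmem hs.le
      _ = v ⬝ᵥ (M *ᵥ v) := by rw [← hc2]; field_simp

lemma lambdaMin_pos' {κ : Type*} [Fintype κ] [Nonempty κ] {M : Matrix κ κ ℝ}
    (hM : M.PosDef) : 0 < lambdaMin M := by
  classical
  set S : Set (κ → ℝ) := {v | ∑ i, v i ^ 2 = 1} with hS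
  have hSne : S.Nonempty := by
    refine ⟨Pi.single (Classical.arbitrary κ) 1, ?_⟩
    simp [hS, Pi.single_apply, sq]
  have hScompact : IsCompact S := by
    have hclosed : IsClosed S := isClosed_eq (by fun_prop) continuous_const
    have hbdd : Bornology.IsBounded S := by
      apply Bornology.IsBounded.subset (Metric.isBounded_closedBall (x := (0 : κ → ℝ)) (r := 1))
      intro v hv
      simp only [Metric.mem_closedBall, dist_zero_right]
      rw [pi_norm_le_iff_of_nonneg zero_le_one]
      intro i
      have h2 : v i ^ 2 ≤ 1 := by
        calc v i ^ 2 ≤ ∑ j, v j ^ 2 :=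
              Finset.single_le_sum (fun j _ => sq_nonneg (v j)) (Finset.mem_univ i)
          _ = 1 := hv
      rw [Real.norm_eq_abs]
      nlinarith [sq_abs (v i), abs_nonneg (v i)]
    exact Metric.isCompact_of_isClosed_isBounded hclosed hbdd
  have hcont : Continuous fun v : κ → ℝ => v ⬝ᵥ (M *ᵥ v) := by
    simp only [dotProduct, Matrix.mulVec]
    fun_prop
  obtain ⟨v₀, hv₀S, hv₀min⟩ := hScompact.exists_isMinOn hSne hcont.continuousOn
  have hv₀ne : v₀ ≠ 0 := by
    intro h
    rw [hS] at hv₀S; simp [h] at hv₀S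
  have hpos : 0 < v₀ ⬝ᵥ (M *ᵥ v₀) := by simpa using hM.dotProduct_mulVec_pos hv₀ne
  refine lt_of_lt_of_le hpos (le_csInf ⟨v₀ ⬝ᵥ (M *ᵥ v₀), v₀, hv₀S, rfl⟩ ?_)
  rintro r ⟨v, hv, rfl⟩
  exact hv₀min hv

lemma proj_le' {ν κ : Type*} [Fintype ν] [Fintype κ] [DecidableEq κ]
    (U : Matrix ν κ ℝ) (r : ν → ℝ) {V : Matrix κ κ ℝ} (hV : V = Uᵀ * U)
    (hpos : V.PosDef) :
    (V⁻¹ *ᵥ (Uᵀ *ᵥ r)) ⬝ᵥ (V *ᵥ (V⁻¹ *ᵥ (Uᵀ *ᵥ r))) ≤ r ⬝ᵥ r := by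
  set q := V⁻¹ *ᵥ (Uᵀ *ᵥ r) with hq
  set s := U *ᵥ q with hs
  have hVinv : V * V⁻¹ = 1 :=
    Matrix.mul_nonsing_inv _ (Matrix.isUnit_iff_isUnit_det _ |>.1 hpos.isUnit)
  have hinv : V *ᵥ q = Uᵀ *ᵥ r := by
    rw [hq, Matrix.mulVec_mulVec, hVinv, Matrix.one_mulVec]
  have h1 : q ⬝ᵥ (V *ᵥ q) = s ⬝ᵥ s := by
    conv_lhs => rw [hV, ← Matrix.mulVec_mulVec, Matrix.dotProduct_mulVec,
      Matrix.vecMul_transpose]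
  have h2 : q ⬝ᵥ (V *ᵥ q) = s ⬝ᵥ r := by
    rw [hinv, Matrix.dotProduct_mulVec, Matrix.vecMul_transpose]
  have h3 : 0 ≤ (r - s) ⬝ᵥ (r - s) :=
    Finset.sum_nonneg fun i _ => mul_self_nonneg _
  have h4 : (r - s) ⬝ᵥ (r - s) = r ⬝ᵥ r - 2 * (s ⬝ᵥ r) + s ⬝ᵥ s := by
    rw [sub_dotProduct, dotProduct_sub, dotProduct_sub,
      dotProduct_comm r s]
    ring
  linarith [h1, h2, h3, h4]

/-- The deterministic (mean) state sequence. -/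
def dstate {n p : ℕ} (A : Matrix (Fin n) (Fin n) ℝ) (B : Matrix (Fin n) (Fin p) ℝ)
    (u : ℕ → Fin p → ℝ) : ℕ → Fin n → ℝ
  | 0 => 0
  | t + 1 => A *ᵥ dstate A B u t + B *ᵥ u t

lemma dstate_eq' {n p : ℕ} (A : Matrix (Fin n) (Fin n) ℝ) (B : Matrix (Fin n) (Fin p) ℝ)
    (u : ℕ → Fin p → ℝ) :
    ∀ t, dstate A B u t = ∑ k ∈ Finset.range t, (A ^ k * B) *ᵥ u (t - 1 - k)
  | 0 => by simp [dstate]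
  | (t + 1) => by
    rw [Finset.sum_range_succ']
    have hf0 : (A ^ 0 * B) *ᵥ u (t + 1 - 1 - 0) = B *ᵥ u t := by simp
    rw [hf0]
    show A *ᵥ dstate A B u t + B *ᵥ u t = _
    rw [dstate_eq' A B u t]
    congr 1
    have hms : A *ᵥ ∑ k ∈ Finset.range t, (A ^ k * B) *ᵥ u (t - 1 - k)
        = ∑ k ∈ Finset.range t, A *ᵥ ((A ^ k * B) *ᵥ u (t - 1 - k)) :=
      map_sum (Matrix.mulVecLin A) _ _
    rw [hms]
    apply Finset.sum_congr rfl
    intro k hk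
    have harg : t + 1 - 1 - (k + 1) = t - 1 - k := by omega
    rw [Matrix.mulVec_mulVec, ← Matrix.mul_assoc, ← pow_succ', harg]

lemma dot_dstate' {n p : ℕ} (A : Matrix (Fin n) (Fin n) ℝ) (B : Matrix (Fin n) (Fin p) ℝ)
    (C : Matrix (Fin p) (Fin n) ℝ) (u : ℕ → Fin p → ℝ) (t : ℕ) (v : Fin p → ℝ) :
    v ⬝ᵥ (C *ᵥ dstate A B u t)
      = ∑ k ∈ Finset.range t, v ⬝ᵥ ((C * A ^ k * B) *ᵥ u (t - 1 - k)) := by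
  rw [dstate_eq']
  have hms : C *ᵥ ∑ k ∈ Finset.range t, (A ^ k * B) *ᵥ u (t - 1 - k)
      = ∑ k ∈ Finset.range t, C *ᵥ ((A ^ k * B) *ᵥ u (t - 1 - k)) :=
    map_sum (Matrix.mulVecLin C) _ _
  rw [hms]
  have hds : v ⬝ᵥ (∑ k ∈ Finset.range t, C *ᵥ ((A ^ k * B) *ᵥ u (t - 1 - k)))
      = ∑ k ∈ Finset.range t, v ⬝ᵥ (C *ᵥ ((A ^ k * B) *ᵥ u (t - 1 - k))) := by
    simp only [dotProduct, Finset.sum_apply, Finset.mul_sum]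
    exact Finset.sum_comm
  rw [hds]
  refine Finset.sum_congr rfl fun k _ => ?_
  rw [Matrix.mulVec_mulVec, Matrix.mul_assoc]

lemma state_succ_apply' {Ω : Type*} {n p : ℕ} (A : Matrix (Fin n) (Fin n) ℝ)
    (B : Matrix (Fin n) (Fin p) ℝ) (u : ℕ → Fin p → ℝ) (w : ℕ → Ω → Fin n → ℝ)
    (t : ℕ) (ω : Ω) (i : Fin n) :
    state A B u w (t + 1) ω i =
      (∑ j, A i j * state A B u w t ω j) + ((B *ᵥ u t) i + w t ω i) := by
  show (A *ᵥ state A B u w t ω + B *ᵥ u t + w t ω) i = _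
  simp [Matrix.mulVec, dotProduct, add_assoc]

lemma state_integrable' {Ω : Type*} [MeasurableSpace Ω] {μ : Measure Ω}
    [IsProbabilityMeasure μ] {n p : ℕ} {A : Matrix (Fin n) (Fin n) ℝ}
    {B : Matrix (Fin n) (Fin p) ℝ} {u : ℕ → Fin p → ℝ} {w : ℕ → Ω → Fin n → ℝ}
    (hint : ∀ t i, Integrable (fun ω => w t ω i) μ) :
    ∀ t i, Integrable (fun ω => state A B u w t ω i) μ := by
  intro t
  induction t with
  | zero => intro i; simp only [state]; exact (integrable_const 0).congr (by simp)
  | succ t ih =>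
    intro i
    have heq : (fun ω => state A B u w (t + 1) ω i) =
        fun ω => (∑ j, A i j * state A B u w t ω j) + ((B *ᵥ u t) i + w t ω i) := by
      funext ω; exact state_succ_apply' A B u w t ω i
    rw [heq]
    exact ((integrable_finset_sum _ fun j _ => (ih j).const_mul _).add
      ((integrable_const _).add (hint t i)))

lemma state_mean' {Ω : Type*} [MeasurableSpace Ω] {μ : Measure Ω}
    [IsProbabilityMeasure μ] {n p : ℕ} {A : Matrix (Fin n) (Fin n) ℝ}
    {B : Matrix (Fin n) (Fin p) ℝ} {u : ℕ → Fin p → ℝ} {w : ℕ → Ω → Fin n → ℝ}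
    (hint : ∀ t i, Integrable (fun ω => w t ω i) μ)
    (hmean : ∀ t i, ∫ ω, w t ω i ∂μ = 0) :
    ∀ t i, ∫ ω, state A B u w t ω i ∂μ = dstate A B u t i := by
  intro t
  induction t with
  | zero => intro i; simp [state, dstate]
  | succ t ih =>
    intro i
    have heq : (fun ω => state A B u w (t + 1) ω i) =
        fun ω => (∑ j, A i j * state A B u w t ω j) + ((B *ᵥ u t) i + w t ω i) := by
      funext ω; exact state_succ_apply' A B u w t ω i
    rw [heq]
    rw [integral_add (f := fun ω => ∑ j, A i j * state A B u w t ω j)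
      (g := fun ω => (B *ᵥ u t) i + w t ω i)
      (integrable_finset_sum _ fun j _ => ((state_integrable' hint t j).const_mul _))
      ((integrable_const _).add (hint t i))]
    rw [integral_add (f := fun _ => (B *ᵥ u t) i) (g := fun ω => w t ω i)
      (integrable_const _) (hint t i)]
    rw [integral_finset_sum _ fun j _ => ((state_integrable' hint t j).const_mul _)]
    simp only [hmean, integral_const, measure_univ, probReal_univ, ENNReal.toReal_one, one_smul, add_zero]
    show _ = (A *ᵥ dstate A B u t + B *ᵥ u t) i
    simp only [Pi.add_apply, Matrix.mulVec, dotProduct]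
    congr 1
    refine Finset.sum_congr rfl fun j _ => ?_
    rw [integral_const_mul, ih j]

lemma output_integrable' {Ω : Type*} [MeasurableSpace Ω] {μ : Measure Ω}
    [IsProbabilityMeasure μ] {n p : ℕ} {A : Matrix (Fin n) (Fin n) ℝ}
    {B : Matrix (Fin n) (Fin p) ℝ} {C : Matrix (Fin p) (Fin n) ℝ}
    {u : ℕ → Fin p → ℝ} {w : ℕ → Ω → Fin n → ℝ} {z : ℕ → Ω → ℝ}
    (hintw : ∀ t i, Integrable (fun ω => w t ω i) μ)
    (hintz : ∀ t, Integrable (z t) μ) (t : ℕ) :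
    Integrable (output A B C u w z t) μ := by
  have heq : output A B C u w z t =
      fun ω => (∑ i, u t i * ∑ j, C i j * state A B u w t ω j) + z t ω := by
    funext ω; simp [output, Matrix.mulVec, dotProduct]
  rw [heq]
  exact (integrable_finset_sum _ fun i _ =>
    ((integrable_finset_sum _ fun j _ =>
      (state_integrable' hintw t j).const_mul _).const_mul _)).add (hintz t)

lemma output_mean' {Ω : Type*} [MeasurableSpace Ω] {μ : Measure Ω}
    [IsProbabilityMeasure μ] {n p : ℕ} {A : Matrix (Fin n) (Fin n) ℝ}
    {B : Matrix (Fin n) (Fin p) ℝ} {C : Matrix (Fin p) (Fin n) ℝ}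
    {u : ℕ → Fin p → ℝ} {w : ℕ → Ω → Fin n → ℝ} {z : ℕ → Ω → ℝ}
    (hintw : ∀ t i, Integrable (fun ω => w t ω i) μ)
    (hmeanw : ∀ t i, ∫ ω, w t ω i ∂μ = 0)
    (hintz : ∀ t, Integrable (z t) μ)
    (hmeanz : ∀ t, ∫ ω, z t ω ∂μ = 0) (t : ℕ) :
    ∫ ω, output A B C u w z t ω ∂μ = u t ⬝ᵥ (C *ᵥ dstate A B u t) := by
  have heq : (fun ω => output A B C u w z t ω) =
      fun ω => (∑ i, u t i * ∑ j, C i j * state A B u w t ω j) + z t ω := by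
    funext ω; simp [output, Matrix.mulVec, dotProduct]
  rw [heq]
  have hint1 : Integrable (fun ω => ∑ i, u t i * ∑ j, C i j * state A B u w t ω j) μ :=
    integrable_finset_sum _ fun i _ =>
      ((integrable_finset_sum _ fun j _ =>
        (state_integrable' hintw t j).const_mul _).const_mul _)
  rw [integral_add (f := fun ω => ∑ i, u t i * ∑ j, C i j * state A B u w t ω j)
    (g := z t) hint1 (hintz t), hmeanz, add_zero]
  rw [integral_finset_sum (f := fun i ω => u t i * ∑ j, C i j * state A B u w t ω j) _ fun i _ =>
    ((integrable_finset_sum _ fun j _ =>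
      (state_integrable' hintw t j).const_mul _).const_mul _)]
  simp only [dotProduct, Matrix.mulVec]
  refine Finset.sum_congr rfl fun i _ => ?_
  rw [integral_const_mul]
  congr 1
  rw [integral_finset_sum _ fun j _ => (state_integrable' hintw t j).const_mul _]
  refine Finset.sum_congr rfl fun j _ => ?_
  rw [integral_const_mul, state_mean' hintw hmeanw t j]

lemma integral_mulVec_comp' {ν κ : Type*} [Fintype ν] [Fintype κ] {Ω : Type*}
    [MeasurableSpace Ω] {μ : Measure Ω} (M : Matrix κ ν ℝ) (y : Ω → ν → ℝ)
    (hy : ∀ s, Integrable (fun ω => y ω s) μ) (a : κ) :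
    ∫ ω, (M *ᵥ y ω) a ∂μ = (M *ᵥ fun s => ∫ ω, y ω s ∂μ) a := by
  simp only [Matrix.mulVec, dotProduct]
  rw [integral_finset_sum _ fun s _ => (hy s).const_mul _]
  exact Finset.sum_congr rfl fun s _ => integral_const_mul _ _

lemma design_dot' {n p : ℕ} (L T : ℕ) (A : Matrix (Fin n) (Fin n) ℝ)
    (B : Matrix (Fin n) (Fin p) ℝ) (C : Matrix (Fin p) (Fin n) ℝ)
    (u : ℕ → Fin p → ℝ) (s : Fin (T - L)) :
    (designU L T u *ᵥ vecOf (markovG L A B C)) s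
      = ∑ k ∈ Finset.range L, u (L + (s : ℕ) + 1) ⬝ᵥ ((C * A ^ k * B) *ᵥ u (L + (s : ℕ) - k)) := by
  rw [← Fin.sum_univ_eq_sum_range
    (fun k => u (L + (s : ℕ) + 1) ⬝ᵥ ((C * A ^ k * B) *ᵥ u (L + (s : ℕ) - k))) L]
  show ∑ x : (Fin L × Fin p) × Fin p, designU L T u s x * vecOf (markovG L A B C) x = _
  rw [Fintype.sum_prod_type, Fintype.sum_prod_type]
  refine Finset.sum_congr rfl fun i _ => ?_
  rw [Finset.sum_comm]
  simp only [designU, vecOf, markovG, vkron, ubar, Matrix.of_apply, dotProduct,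
    Matrix.mulVec]
  refine Finset.sum_congr rfl fun a _ => ?_
  rw [Finset.mul_sum]
  refine Finset.sum_congr rfl fun j _ => ?_
  ring

/-- **Mean estimation error bounds.**
`‖E[ΔG]‖_Ṽ ≤ β²‖B‖‖C‖ (φρᴸ/(1-ρ)) √(T-L)` and
`‖E[ΔG]‖₂ ≤ β²‖B‖‖C‖ (φρᴸ/(1-ρ)) √((T-L)/λ_min(Ṽ))`. -/
theorem mean_estimation_error_bounds
    {Ω : Type*} [MeasurableSpace Ω] (μ : Measure Ω) [IsProbabilityMeasure μ]
    {n p L T : ℕ} (hL : 1 ≤ L) (hT : L < T)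
    (A : Matrix (Fin n) (Fin n) ℝ) (B : Matrix (Fin n) (Fin p) ℝ)
    (C : Matrix (Fin p) (Fin n) ℝ)
    (u : ℕ → Fin p → ℝ) (w : ℕ → Ω → Fin n → ℝ) (z : ℕ → Ω → ℝ)
    (Sw : Matrix (Fin n) (Fin n) ℝ) (σz : ℝ)
    (hnoise : NoiseAssumption μ w z Sw σz)
    (ρ φ : ℝ) (hρ : ρ ∈ Set.Ioo (0 : ℝ) 1) (hφ : 1 ≤ φ)
    (hstab : ∀ k : ℕ, specNorm (A ^ k) ≤ φ * ρ ^ k)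
    (β : ℝ) (hu : ∀ t, vecNorm (u t) ≤ β)
    (Util : Matrix (Fin (T - L)) ((Fin L × Fin p) × Fin p) ℝ)
    (hUtil : Util = designU L T u)
    (Vtil : Matrix ((Fin L × Fin p) × Fin p) ((Fin L × Fin p) × Fin p) ℝ)
    (hVtil : Vtil = Utilᵀ * Util) (hpos : Vtil.PosDef)
    (y : Ω → Fin (T - L) → ℝ)
    (hy : ∀ ω s, y ω s = output A B C u w z (L + 1 + (s : ℕ)) ω)
    (ΔG : Ω → ((Fin L × Fin p) × Fin p → ℝ))
    (hΔG : ∀ ω, ΔG ω = Vtil⁻¹ *ᵥ (Utilᵀ *ᵥ y ω) - vecOf (markovG L A B C))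
    (meanΔG : (Fin L × Fin p) × Fin p → ℝ)
    (hmean : meanΔG = fun a => ∫ ω, ΔG ω a ∂μ) :
    mnorm Vtil meanΔG ≤
        β ^ 2 * specNorm B * specNorm C * (φ * ρ ^ L / (1 - ρ))
          * Real.sqrt ((T - L : ℕ) : ℝ) ∧
      vecNorm meanΔG ≤
        β ^ 2 * specNorm B * specNorm C * (φ * ρ ^ L / (1 - ρ))
          * Real.sqrt (((T - L : ℕ) : ℝ) / lambdaMin Vtil) := by
  classical
  obtain ⟨hρ0, hρ1⟩ := hρ
  have h1ρ : 0 < 1 - ρ := by linarith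
  have hβ0 : 0 ≤ β := le_trans (Real.sqrt_nonneg _) (hu 0)
  have hB0 : 0 ≤ specNorm B := specNorm_nonneg' B
  have hC0 : 0 ≤ specNorm C := specNorm_nonneg' C
  have hφ0 : (0:ℝ) < φ := lt_of_lt_of_le one_pos hφ
  have hfac : 0 ≤ φ * ρ ^ L / (1 - ρ) := by positivity
  have hc0 : 0 ≤ β ^ 2 * specNorm B * specNorm C * (φ * ρ ^ L / (1 - ρ)) :=
    mul_nonneg (mul_nonneg (mul_nonneg (sq_nonneg β) hB0) hC0) hfac
  set c := β ^ 2 * specNorm B * specNorm C * (φ * ρ ^ L / (1 - ρ)) with hcdef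
  rcases Nat.eq_zero_or_pos p with hp0 | hp0
  · subst hp0
    constructor
    · have hz : meanΔG ⬝ᵥ (Vtil *ᵥ meanΔG) = 0 := by
        simp [dotProduct]
      unfold mnorm
      rw [hz, Real.sqrt_zero]
      exact mul_nonneg hc0 (Real.sqrt_nonneg _)
    · have hz : (∑ i, meanΔG i ^ 2) = 0 := by simp
      unfold vecNorm
      rw [hz, Real.sqrt_zero]
      exact mul_nonneg hc0 (Real.sqrt_nonneg _)
  · have hw_int := hnoise.int_w
    have hw_mean := hnoise.mean_w
    have hzz_int := hnoise.int_z
    have hzz_mean := hnoise.mean_z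
    have hyeq : ∀ s : Fin (T - L), (fun ω => y ω s) = output A B C u w z (L + 1 + (s:ℕ)) := by
      intro s; funext ω; exact hy ω s
    have hyint : ∀ s, Integrable (fun ω => y ω s) μ := fun s => by
      rw [hyeq s]; exact output_integrable' hw_int hzz_int _
    set r : Fin (T - L) → ℝ := fun s =>
      ∑ k ∈ Finset.Ico L (L + 1 + (s:ℕ)),
        u (L + 1 + (s:ℕ)) ⬝ᵥ ((C * A ^ k * B) *ᵥ u (L + 1 + (s:ℕ) - 1 - k)) with hrdef
    set vG := vecOf (markovG L A B C) with hvGdef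
    have hdet : IsUnit Vtil.det := Matrix.isUnit_iff_isUnit_det _ |>.1 hpos.isUnit
    -- the mean of the outputs
    have hEy : (fun s => ∫ ω, y ω s ∂μ) = Util *ᵥ vG + r := by
      funext s
      rw [hyeq s, output_mean' hw_int hw_mean hzz_int hzz_mean]
      rw [dot_dstate']
      rw [Finset.range_eq_Ico,
        ← Finset.sum_Ico_consecutive _ (Nat.zero_le L) (by omega : L ≤ L + 1 + (s:ℕ)),
        ← Finset.range_eq_Ico]
      have hdes : (Util *ᵥ vG) s = ∑ k ∈ Finset.range L,
          u (L + 1 + (s:ℕ)) ⬝ᵥ ((C * A ^ k * B) *ᵥ u (L + 1 + (s:ℕ) - 1 - k)) := by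
        rw [hUtil, hvGdef, design_dot' L T A B C u s]
        refine Finset.sum_congr rfl fun k hk => ?_
        have h1 : L + (s:ℕ) + 1 = L + 1 + (s:ℕ) := by omega
        have h2 : L + (s:ℕ) - k = L + 1 + (s:ℕ) - 1 - k := by omega
        rw [h1, h2]
      show _ = (Util *ᵥ vG) s + r s
      rw [hdes]
    -- the mean error
    have hUyint : ∀ b, Integrable (fun ω => (Utilᵀ *ᵥ y ω) b) μ := fun b => by
      simp only [Matrix.mulVec, dotProduct]
      exact integrable_finset_sum _ fun s _ => (hyint s).const_mul _
    have hmean2 : meanΔG = Vtil⁻¹ *ᵥ (Utilᵀ *ᵥ (Util *ᵥ vG + r)) - vG := by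
      rw [hmean]
      funext a
      have hΔa : (fun ω => ΔG ω a) = fun ω => (Vtil⁻¹ *ᵥ (Utilᵀ *ᵥ y ω)) a - vG a := by
        funext ω; rw [hΔG ω]; rfl
      rw [hΔa]
      have hint1 : Integrable (fun ω => (Vtil⁻¹ *ᵥ (Utilᵀ *ᵥ y ω)) a) μ := by
        simp only [Matrix.mulVec, dotProduct]
        exact integrable_finset_sum _ fun b _ =>
          ((integrable_finset_sum _ fun s _ => (hyint s).const_mul _).const_mul _)
      rw [integral_sub hint1 (integrable_const _)]
      simp only [integral_const, measure_univ, probReal_univ, ENNReal.toReal_one, one_smul]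
      rw [integral_mulVec_comp' Vtil⁻¹ (fun ω => Utilᵀ *ᵥ y ω) hUyint a]
      have hswap : (fun b => ∫ ω, (Utilᵀ *ᵥ y ω) b ∂μ)
          = Utilᵀ *ᵥ (fun s => ∫ ω, y ω s ∂μ) := by
        funext b; exact integral_mulVec_comp' Utilᵀ y hyint b
      rw [hswap, hEy]
      rfl
    have hmean3 : meanΔG = Vtil⁻¹ *ᵥ (Utilᵀ *ᵥ r) := by
      have e1 : Utilᵀ *ᵥ (Util *ᵥ vG + r) = Vtil *ᵥ vG + Utilᵀ *ᵥ r := by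
        rw [Matrix.mulVec_add, Matrix.mulVec_mulVec, ← hVtil]
      have e2 : Vtil⁻¹ *ᵥ (Vtil *ᵥ vG + Utilᵀ *ᵥ r) = vG + Vtil⁻¹ *ᵥ (Utilᵀ *ᵥ r) := by
        rw [Matrix.mulVec_add, Matrix.mulVec_mulVec, Matrix.nonsing_inv_mul _ hdet,
          Matrix.one_mulVec]
      rw [hmean2, e1, e2, add_sub_cancel_left]
    -- bound on the bias terms
    have hrb : ∀ s, |r s| ≤ c := by
      intro s
      have habs : |r s| ≤ ∑ k ∈ Finset.Ico L (L + 1 + (s:ℕ)),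
          |u (L + 1 + (s:ℕ)) ⬝ᵥ ((C * A ^ k * B) *ᵥ u (L + 1 + (s:ℕ) - 1 - k))| :=
        Finset.abs_sum_le_sum_abs _ _
      have hterm : ∀ k ∈ Finset.Ico L (L + 1 + (s:ℕ)),
          |u (L + 1 + (s:ℕ)) ⬝ᵥ ((C * A ^ k * B) *ᵥ u (L + 1 + (s:ℕ) - 1 - k))|
            ≤ (β ^ 2 * specNorm B * specNorm C * φ) * ρ ^ k := by
        intro k hk
        have hφρ : 0 ≤ φ * ρ ^ k := by positivity
        have h2 : specNorm (C * A ^ k * B) ≤ specNorm C * (φ * ρ ^ k) * specNorm B := by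
          calc specNorm (C * A ^ k * B) ≤ specNorm (C * A ^ k) * specNorm B :=
                specNorm_mul_le' _ _
            _ ≤ (specNorm C * specNorm (A ^ k)) * specNorm B :=
                mul_le_mul_of_nonneg_right (specNorm_mul_le' _ _) hB0
            _ ≤ (specNorm C * (φ * ρ ^ k)) * specNorm B :=
                mul_le_mul_of_nonneg_right
                  (mul_le_mul_of_nonneg_left (hstab k) hC0) hB0
        have hcc0 : 0 ≤ specNorm C * (φ * ρ ^ k) * specNorm B :=
          mul_nonneg (mul_nonneg hC0 hφρ) hB0
        calc |u (L + 1 + (s:ℕ)) ⬝ᵥ ((C * A ^ k * B) *ᵥ u (L + 1 + (s:ℕ) - 1 - k))|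
            ≤ specNorm (C * A ^ k * B) * vecNorm (u (L + 1 + (s:ℕ)))
                * vecNorm (u (L + 1 + (s:ℕ) - 1 - k)) :=
              abs_dotProduct_mulVec_le' _ _ _
          _ ≤ (specNorm C * (φ * ρ ^ k) * specNorm B) * β * β := by
              apply mul_le_mul _ (hu _) (Real.sqrt_nonneg _)
                (mul_nonneg hcc0 hβ0)
              exact mul_le_mul h2 (hu _) (Real.sqrt_nonneg _) hcc0
          _ = (β ^ 2 * specNorm B * specNorm C * φ) * ρ ^ k := by ring
      have hsum : ∑ k ∈ Finset.Ico L (L + 1 + (s:ℕ)),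
          (β ^ 2 * specNorm B * specNorm C * φ) * ρ ^ k
            = (β ^ 2 * specNorm B * specNorm C * φ)
              * ∑ k ∈ Finset.Ico L (L + 1 + (s:ℕ)), ρ ^ k := by
        rw [Finset.mul_sum]
      have he0 : 0 ≤ β ^ 2 * specNorm B * specNorm C * φ := by
        have := mul_nonneg (mul_nonneg (sq_nonneg β) hB0) hC0
        exact mul_nonneg this hφ0.le
      calc |r s| ≤ _ := habs
        _ ≤ ∑ k ∈ Finset.Ico L (L + 1 + (s:ℕ)),
              (β ^ 2 * specNorm B * specNorm C * φ) * ρ ^ k :=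
            Finset.sum_le_sum hterm
        _ = (β ^ 2 * specNorm B * specNorm C * φ)
              * ∑ k ∈ Finset.Ico L (L + 1 + (s:ℕ)), ρ ^ k := hsum
        _ ≤ (β ^ 2 * specNorm B * specNorm C * φ) * (ρ ^ L / (1 - ρ)) :=
            mul_le_mul_of_nonneg_left (sum_pow_Ico_le' hρ0 hρ1 _ _) he0
        _ = c := by rw [hcdef]; ring
    have hrr : r ⬝ᵥ r ≤ ((T - L : ℕ) : ℝ) * c ^ 2 := by
      have hsq : ∀ s : Fin (T - L), r s * r s ≤ c ^ 2 := fun s => by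
        nlinarith [hrb s, abs_nonneg (r s), abs_mul_abs_self (r s)]
      calc r ⬝ᵥ r = ∑ s, r s * r s := rfl
        _ ≤ ∑ _s : Fin (T - L), c ^ 2 := Finset.sum_le_sum fun s _ => hsq s
        _ = ((T - L : ℕ) : ℝ) * c ^ 2 := by
            rw [Finset.sum_const, Finset.card_univ, Fintype.card_fin, nsmul_eq_mul]
    have hproj : meanΔG ⬝ᵥ (Vtil *ᵥ meanΔG) ≤ r ⬝ᵥ r := by
      rw [hmean3]; exact proj_le' Util r hVtil hpos
    have hkey : meanΔG ⬝ᵥ (Vtil *ᵥ meanΔG) ≤ ((T - L : ℕ) : ℝ) * c ^ 2 := hproj.trans hrr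
    constructor
    · unfold mnorm
      calc Real.sqrt (meanΔG ⬝ᵥ (Vtil *ᵥ meanΔG))
          ≤ Real.sqrt (((T - L : ℕ) : ℝ) * c ^ 2) := Real.sqrt_le_sqrt hkey
        _ = c * Real.sqrt ((T - L : ℕ) : ℝ) := by
            rw [mul_comm, Real.sqrt_mul (sq_nonneg c), Real.sqrt_sq hc0]
    · haveI : Nonempty ((Fin L × Fin p) × Fin p) :=
        ⟨((⟨0, hL⟩, ⟨0, hp0⟩), ⟨0, hp0⟩)⟩
      have hlam : 0 < lambdaMin Vtil := lambdaMin_pos' hpos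
      have h1 : lambdaMin Vtil * (∑ i, meanΔG i ^ 2) ≤ meanΔG ⬝ᵥ (Vtil *ᵥ meanΔG) :=
        lambdaMin_mul_le' hpos.posSemidef _
      have h2 : ∑ i, meanΔG i ^ 2 ≤ ((T - L : ℕ) : ℝ) * c ^ 2 / lambdaMin Vtil := by
        rw [le_div_iff₀ hlam]
        calc (∑ i, meanΔG i ^ 2) * lambdaMin Vtil
            = lambdaMin Vtil * ∑ i, meanΔG i ^ 2 := mul_comm _ _
          _ ≤ _ := h1.trans hkey
      unfold vecNorm
      calc Real.sqrt (∑ i, meanΔG i ^ 2)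
          ≤ Real.sqrt (((T - L : ℕ) : ℝ) * c ^ 2 / lambdaMin Vtil) := Real.sqrt_le_sqrt h2
        _ = c * Real.sqrt (((T - L : ℕ) : ℝ) / lambdaMin Vtil) := by
            rw [show ((T - L : ℕ) : ℝ) * c ^ 2 / lambdaMin Vtil
                = c ^ 2 * (((T - L : ℕ) : ℝ) / lambdaMin Vtil) by ring]
            rw [Real.sqrt_mul (sq_nonneg c), Real.sqrt_sq hc0]
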